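/- Let π ∈ End(R^d) have rank r, let V be an r-dimensional subspace with V ∩ ker π = {0}, and suppose λ_n g_n → π in End(R^d) for scalars λ_n and linear maps g_n ∈ GL_d(R). Then g_n V → im π in the Grassmannian Gr(r, d). -/

import Mathlib

open Filter

noncomputable section

abbrev Euc (d : ℕ) := EuclideanSpace ℝ (Fin d)

abbrev Endo (d : ℕ) := Euc d →L[ℝ] Euc d

/-- The rank of an endomorphism. -/
def rk {d : ℕ} (f : Endo d) : ℕ :=
  Module.finrank ℝ (LinearMap.range (f : Euc d →ₗ[ℝ] Euc d))

/-- `d_H(V, V') = sup` over unit vectors `v ∈ V` of `dist(v, V')`. -/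
def dH {d : ℕ} (V V' : Submodule ℝ (Euc d)) : ℝ :=
  sSup {c | ∃ v ∈ V, ‖v‖ = 1 ∧ c = Metric.infDist v (V' : Set (Euc d))}

set_option maxHeartbeats 1000000 in
theorem stmt10 {d r : ℕ} (π : Endo d) (hrk : rk π = r)
    (V : Submodule ℝ (Euc d)) (hV : Module.finrank ℝ V = r)
    (hVker : V ⊓ LinearMap.ker (π : Euc d →ₗ[ℝ] Euc d) = ⊥)
    (lam : ℕ → ℝ) (g : ℕ → (Endo d)ˣ)
    (hconv : Tendsto (fun n => lam n • ((g n : Endo d))) atTop (nhds π)) :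
    Tendsto (fun n => dH (V.map (((g n : Endo d)) : Euc d →ₗ[ℝ] Euc d))
        (LinearMap.range (π : Euc d →ₗ[ℝ] Euc d))) atTop (nhds 0) ∧
    Tendsto (fun n => dH (LinearMap.range (π : Euc d →ₗ[ℝ] Euc d))
        (V.map (((g n : Endo d)) : Euc d →ₗ[ℝ] Euc d))) atTop (nhds 0) := by
  set πₗ : Euc d →ₗ[ℝ] Euc d := (π : Euc d →ₗ[ℝ] Euc d) with hπₗdef
  -- the restriction of π to V has trivial kernel
  have hker : LinearMap.ker (πₗ.domRestrict V) = ⊥ := by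
    rw [Submodule.eq_bot_iff]
    intro w hw
    rw [LinearMap.mem_ker, LinearMap.domRestrict_apply] at hw
    have : (w : Euc d) ∈ V ⊓ LinearMap.ker πₗ := ⟨w.2, hw⟩
    rw [hVker, Submodule.mem_bot] at this
    exact Subtype.ext this
  -- antilipschitz constant
  obtain ⟨K, hKpos, hanti⟩ := (πₗ.domRestrict V).exists_antilipschitzWith hker
  set Kr : ℝ := (K : ℝ) with hKrdef
  have hKr : 0 < Kr := hKpos
  have hKw : ∀ w ∈ V, ‖w‖ ≤ Kr * ‖πₗ w‖ := by
    intro w hw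
    have h := hanti.le_mul_dist (⟨w, hw⟩ : V) 0
    simpa [dist_eq_norm, LinearMap.domRestrict_apply] using h
  -- π maps V onto its range
  have hmap : V.map πₗ = LinearMap.range πₗ := by
    apply Submodule.eq_of_le_of_finrank_eq
    · rintro x ⟨w, hw, rfl⟩
      exact LinearMap.mem_range_self _ w
    · rw [← LinearMap.range_domRestrict,
        LinearMap.finrank_range_of_inj (LinearMap.ker_eq_bot.mp hker), hV]
      exact hrk.symm
  -- the error term
  set E : ℕ → ℝ := fun n => ‖lam n • ((g n : Endo d)) - π‖ with hEdef
  have hE : Tendsto E atTop (nhds 0) := tendsto_iff_norm_sub_tendsto_zero.mp hconv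
  have hEnn : ∀ n, 0 ≤ E n := fun n => norm_nonneg _
  have hpt : ∀ n w, ‖lam n • ((g n : Endo d)) w - π w‖ ≤ E n * ‖w‖ := by
    intro n w
    have h := ((lam n • ((g n : Endo d))) - π).le_opNorm w
    rw [ContinuousLinearMap.sub_apply, ContinuousLinearMap.smul_apply] at h
    exact h
  constructor
  · -- direction 1 : g_n V → im π
    have hEconv : Tendsto (fun n => 2 * Kr * E n) atTop (nhds 0) := by
      have h := hE.const_mul (2 * Kr)
      rw [mul_zero] at h
      exact h
    apply squeeze_zero' (g := fun n => 2 * Kr * E n) _ _ hEconv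
    · filter_upwards with n
      apply Real.sSup_nonneg
      rintro x ⟨v, hv, hv1, rfl⟩
      exact Metric.infDist_nonneg
    · have hev : ∀ᶠ n in atTop, E n < 1 / (2 * Kr) :=
        hE.eventually (gt_mem_nhds (by positivity))
      filter_upwards [hev] with n hn
      apply Real.sSup_le _ (by positivity)
      rintro x ⟨v, hv, hv1, rfl⟩
      rw [Submodule.mem_map] at hv
      obtain ⟨w, hwV, rfl⟩ := hv
      have hgw : (((g n : Endo d)) : Euc d →ₗ[ℝ] Euc d) w = (g n : Endo d) w := rfl
      rw [hgw] at hv1 ⊢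
      have hw0 : w ≠ 0 := by
        rintro rfl
        simp at hv1
      have hwpos : 0 < ‖w‖ := norm_pos_iff.mpr hw0
      -- norm of the rescaled image is |lam n|
      have hla : ‖lam n • (g n : Endo d) w‖ = |lam n| := by
        rw [norm_smul, hv1, Real.norm_eq_abs, mul_one]
      -- lower bound on |lam n|
      have h1 : ‖πₗ w‖ ≤ |lam n| + E n * ‖w‖ := by
        have h2 : ‖(π w : Euc d)‖ ≤
            ‖lam n • (g n : Endo d) w‖ + ‖lam n • (g n : Endo d) w - π w‖ := by
          have h3 := norm_sub_le (lam n • (g n : Endo d) w)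
            (lam n • (g n : Endo d) w - π w)
          simpa using h3
        have hπw : (πₗ w : Euc d) = π w := rfl
        rw [hπw]
        calc ‖(π w : Euc d)‖ ≤ _ + _ := h2
          _ ≤ |lam n| + E n * ‖w‖ := by
              rw [hla]
              exact add_le_add_right (hpt n w) _
      have hbnd : ‖w‖ ≤ 2 * Kr * |lam n| := by
        have h4 := hKw w hwV
        have h5 : Kr * E n * ‖w‖ ≤ (1 / 2) * ‖w‖ := by
          have : Kr * E n ≤ 1 / 2 := by
            rw [lt_div_iff₀ (by positivity : (0:ℝ) < 2 * Kr)] at hn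
            nlinarith
          nlinarith
        nlinarith
      have hlam : 0 < |lam n| := by nlinarith
      have hlam0 : lam n ≠ 0 := by
        intro h
        rw [h] at hlam
        simp at hlam
      -- the distance bound
      have hmem : (lam n)⁻¹ • π w ∈ (LinearMap.range πₗ : Set (Euc d)) :=
        (LinearMap.range πₗ).smul_mem _ (LinearMap.mem_range_self πₗ w)
      have hd := Metric.infDist_le_dist_of_mem (x := (g n : Endo d) w) hmem
      have heq : (g n : Endo d) w - (lam n)⁻¹ • π w =
          (lam n)⁻¹ • (lam n • (g n : Endo d) w - π w) := by
        rw [smul_sub, smul_smul, inv_mul_cancel₀ hlam0, one_smul]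
      have hdist : dist ((g n : Endo d) w) ((lam n)⁻¹ • π w) =
          |lam n|⁻¹ * ‖lam n • (g n : Endo d) w - π w‖ := by
        rw [dist_eq_norm, heq, norm_smul, Real.norm_eq_abs, abs_inv]
      refine hd.trans ?_
      rw [hdist]
      rw [inv_mul_le_iff₀ hlam]
      calc ‖lam n • (g n : Endo d) w - π w‖
          ≤ E n * ‖w‖ := hpt n w
        _ ≤ E n * (2 * Kr * |lam n|) := by
            exact mul_le_mul_of_nonneg_left hbnd (hEnn n)
        _ = |lam n| * (2 * Kr * E n) := by ring
  · -- direction 2 : im π ⊂ limit of g_n V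
    have hEconv : Tendsto (fun n => Kr * E n) atTop (nhds 0) := by
      have h := hE.const_mul Kr
      rw [mul_zero] at h
      exact h
    apply squeeze_zero' (g := fun n => Kr * E n) _ _ hEconv
    · filter_upwards with n
      apply Real.sSup_nonneg
      rintro x ⟨v, hv, hv1, rfl⟩
      exact Metric.infDist_nonneg
    · filter_upwards with n
      apply Real.sSup_le _ (by positivity)
      rintro x ⟨u, hu, hu1, rfl⟩
      rw [← hmap, Submodule.mem_map] at hu
      obtain ⟨w, hwV, rfl⟩ := hu
      have hwn : ‖w‖ ≤ Kr := by
        have := hKw w hwV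
        rw [hu1, mul_one] at this
        exact this
      have hmem : lam n • (g n : Endo d) w ∈
          ((V.map (((g n : Endo d)) : Euc d →ₗ[ℝ] Euc d)) : Set (Euc d)) :=
        (V.map _).smul_mem _ (Submodule.mem_map_of_mem hwV)
      have hd := Metric.infDist_le_dist_of_mem (x := (πₗ w : Euc d)) hmem
      refine hd.trans ?_
      have hπw : (πₗ w : Euc d) = π w := rfl
      rw [dist_eq_norm, hπw, norm_sub_rev]
      calc ‖lam n • (g n : Endo d) w - π w‖
          ≤ E n * ‖w‖ := hpt n w
        _ ≤ E n * Kr := mul_le_mul_of_nonneg_left hwn (hEnn n)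
        _ = Kr * E n := by ring
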